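/- Let H ∈ (0,1), K ∈ (0,1), fix t > 0 and u ≥ 0 with u > 0. Then, with σ²_ρ = R^{H,K}(t+ρu, t+ρu) + R^{H,K}(t,t) − 2R^{H,K}(t+ρu, t), one has σ²_ρ / ρ^{2HK} → 2^{1−K} u^{2HK} as ρ → 0⁺. -/

import Mathlib

open Real Set Filter

/-- Covariance of the bifractional Brownian motion. -/
noncomputable def Rbf (H K t s : ℝ) : ℝ :=
  2 ^ (-K) * ((t ^ (2 * H) + s ^ (2 * H)) ^ K - |t - s| ^ (2 * H * K))

theorem bfBm_lass_variance (H K : ℝ) (hH : H ∈ Set.Ioo (0:ℝ) 1)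
    (hK : K ∈ Set.Ioo (0:ℝ) 1) (t u : ℝ) (ht : 0 < t) (hu : 0 < u) :
    Tendsto (fun ρ : ℝ =>
        (Rbf H K (t + ρ * u) (t + ρ * u) + Rbf H K t t - 2 * Rbf H K (t + ρ * u) t) /
          ρ ^ (2 * H * K))
      (nhdsWithin 0 (Set.Ioi 0)) (nhds (2 ^ (1 - K) * u ^ (2 * H * K))) := by
  obtain ⟨hH0, hH1⟩ := hH
  obtain ⟨hK0, hK1⟩ := hK
  set a : ℝ := 2 * H * K with ha_def
  set b : ℝ := 2 * H with hb_def
  have hba : b * K = a := by rw [ha_def, hb_def]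
  have hb0 : (0:ℝ) < b := by rw [hb_def]; linarith
  have ha0 : (0:ℝ) < a := by rw [ha_def]; positivity
  have ha2 : a < 2 := by rw [ha_def]; nlinarith
  set c : ℝ := (2:ℝ) ^ (1 - K) with hc_def
  -- `2 * 2^(-K) = c`
  have h2c : 2 * (2:ℝ) ^ (-K) = c := by
    rw [hc_def, show (2:ℝ) * (2:ℝ) ^ (-K) = 2 ^ (1:ℝ) * 2 ^ (-K) by rw [Real.rpow_one],
      ← Real.rpow_add two_pos, show (1:ℝ) + -K = 1 - K by ring]
  -- value of `Rbf` on the diagonal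
  have hdiag : ∀ s : ℝ, 0 < s → Rbf H K s s = s ^ a := by
    intro s hs
    unfold Rbf
    rw [sub_self, abs_zero, Real.zero_rpow (by positivity), sub_zero, ← two_mul,
      Real.mul_rpow (by norm_num) (Real.rpow_nonneg hs.le _), ← Real.rpow_mul hs.le, hba,
      ← mul_assoc, ← Real.rpow_add two_pos, neg_add_cancel, Real.rpow_zero, one_mul]
  -- the "smooth" part of the variance
  set F : ℝ → ℝ := fun ρ => (t + ρ * u) ^ a + t ^ a - c * ((t + ρ * u) ^ b + t ^ b) ^ K
    with hF_def
  set F' : ℝ → ℝ := fun ρ =>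
    u * a * (t + ρ * u) ^ (a - 1) -
      c * (u * b * (t + ρ * u) ^ (b - 1) * K * ((t + ρ * u) ^ b + t ^ b) ^ (K - 1))
    with hF'_def
  have hF0 : F 0 = 0 := by
    have h1 : ((t:ℝ) ^ b + t ^ b) ^ K = 2 ^ K * t ^ a := by
      rw [← two_mul, Real.mul_rpow (by norm_num) (Real.rpow_nonneg ht.le _),
        ← Real.rpow_mul ht.le, hba]
    have h2 : c * ((2:ℝ) ^ K * t ^ a) = 2 * t ^ a := by
      rw [hc_def, ← mul_assoc, ← Real.rpow_add two_pos,
        show (1:ℝ) - K + K = 1 by ring, Real.rpow_one]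
    simp only [hF_def, zero_mul, add_zero, h1, h2]
    ring
  have hF'0 : F' 0 = 0 := by
    have h1 : ((t:ℝ) ^ b + t ^ b) ^ (K - 1) = 2 ^ (K - 1) * t ^ (b * (K - 1)) := by
      rw [← two_mul, Real.mul_rpow (by norm_num) (Real.rpow_nonneg ht.le _),
        ← Real.rpow_mul ht.le]
    simp only [hF'_def, zero_mul, add_zero, h1, hc_def]
    have h2 : (2:ℝ) ^ (1 - K) * 2 ^ (K - 1) = 1 := by
      rw [← Real.rpow_add two_pos]; norm_num
    have h3 : t ^ (b - 1) * t ^ (b * (K - 1)) = t ^ (a - 1) := by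
      rw [← Real.rpow_add ht, ← hba]; ring_nf
    calc u * a * t ^ (a - 1) -
          2 ^ (1 - K) * (u * b * t ^ (b - 1) * K * (2 ^ (K - 1) * t ^ (b * (K - 1))))
        = u * a * t ^ (a - 1) -
          (2 ^ (1 - K) * 2 ^ (K - 1)) * (u * (b * K)) * (t ^ (b - 1) * t ^ (b * (K - 1))) := by
          ring
      _ = 0 := by rw [h2, h3, hba, one_mul]; ring
  -- derivative of F at every point with `t + ρ u > 0`
  have hinner : ∀ ρ : ℝ, HasDerivAt (fun ρ : ℝ => t + ρ * u) u ρ := by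
    intro ρ
    simpa using ((hasDerivAt_id ρ).mul_const u).const_add t
  have hFder : ∀ ρ : ℝ, 0 < t + ρ * u → HasDerivAt F (F' ρ) ρ := by
    intro ρ hρ
    have h1 : HasDerivAt (fun ρ : ℝ => (t + ρ * u) ^ a) (u * a * (t + ρ * u) ^ (a - 1)) ρ :=
      (hinner ρ).rpow_const (Or.inl (ne_of_gt hρ))
    have h2 : HasDerivAt (fun ρ : ℝ => (t + ρ * u) ^ b + t ^ b)
        (u * b * (t + ρ * u) ^ (b - 1)) ρ := by
      simpa using ((hinner ρ).rpow_const (Or.inl (ne_of_gt hρ))).add_const (t ^ b)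
    have hS : (0:ℝ) < (t + ρ * u) ^ b + t ^ b := by positivity
    have h3 : HasDerivAt (fun ρ : ℝ => c * ((t + ρ * u) ^ b + t ^ b) ^ K)
        (c * (u * b * (t + ρ * u) ^ (b - 1) * K * ((t + ρ * u) ^ b + t ^ b) ^ (K - 1))) ρ :=
      (h2.rpow_const (Or.inl (ne_of_gt hS))).const_mul c
    exact (h1.add_const (t ^ a)).sub h3
  -- F' is differentiable at 0
  have hF'diff : DifferentiableAt ℝ F' 0 := by
    have hin : DifferentiableAt ℝ (fun ρ : ℝ => t + ρ * u) 0 := by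
      exact (differentiableAt_id.mul_const u).const_add t
    have h0 : (0:ℝ) < t + 0 * u := by simpa using ht
    have hS : (0:ℝ) < (t + 0 * u) ^ b + t ^ b := by positivity
    have d1 : DifferentiableAt ℝ (fun ρ : ℝ => (t + ρ * u) ^ (a - 1)) 0 :=
      hin.rpow_const (Or.inl (ne_of_gt h0))
    have d2 : DifferentiableAt ℝ (fun ρ : ℝ => (t + ρ * u) ^ (b - 1)) 0 :=
      hin.rpow_const (Or.inl (ne_of_gt h0))
    have d3 : DifferentiableAt ℝ (fun ρ : ℝ => ((t + ρ * u) ^ b + t ^ b) ^ (K - 1)) 0 := by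
      exact ((hin.rpow_const (Or.inl (ne_of_gt h0))).add_const (t ^ b)).rpow_const
        (Or.inl (ne_of_gt hS))
    exact ((d1.const_mul (u * a))).sub
      ((((d2.const_mul (u * b)).mul_const K).mul d3).const_mul c)
  -- slope of F' at 0 tends to some limit
  obtain ⟨L, hL⟩ : ∃ L, HasDerivAt F' L 0 := ⟨deriv F' 0, hF'diff.hasDerivAt⟩
  have hslope : Tendsto (fun ρ : ℝ => F' ρ / ρ) (nhdsWithin 0 (Set.Ioi 0)) (nhds L) := by
    have := hasDerivAt_iff_tendsto_slope.mp hL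
    have h := this.mono_left (nhdsWithin_mono 0 (by
      intro x hx
      simp only [Set.mem_compl_iff, Set.mem_singleton_iff]
      exact ne_of_gt hx))
    refine h.congr (fun ρ => ?_)
    simp [slope_def_field, hF'0, div_eq_mul_inv, mul_comm]
  -- the main cancellation: F ρ / ρ ^ a → 0
  have hmain : Tendsto (fun ρ : ℝ => F ρ / ρ ^ a) (nhdsWithin 0 (Set.Ioi 0)) (nhds 0) := by
    apply HasDerivAt.lhopital_zero_nhdsGT (f' := F') (g' := fun ρ : ℝ => a * ρ ^ (a - 1))
    · filter_upwards [self_mem_nhdsWithin] with ρ (hρ : 0 < ρ)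
      exact hFder ρ (by positivity)
    · filter_upwards [self_mem_nhdsWithin] with ρ (hρ : 0 < ρ)
      exact Real.hasDerivAt_rpow_const (Or.inl (ne_of_gt hρ))
    · filter_upwards [self_mem_nhdsWithin] with ρ (hρ : 0 < ρ)
      have : (0:ℝ) < ρ ^ (a - 1) := Real.rpow_pos_of_pos hρ _
      positivity
    · have hc : ContinuousAt F 0 := (hFder 0 (by simpa using ht)).continuousAt
      have := hc.continuousWithinAt (s := Set.Ioi 0)
      rw [ContinuousWithinAt, hF0] at this
      exact this
    · have hc : ContinuousAt (fun ρ : ℝ => ρ ^ a) 0 :=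
        Real.continuousAt_rpow_const 0 a (Or.inr ha0.le)
      have := hc.continuousWithinAt (s := Set.Ioi 0)
      rw [ContinuousWithinAt, Real.zero_rpow (ne_of_gt ha0)] at this
      exact this
    · -- F' ρ / (a ρ^(a-1)) = (F' ρ / ρ) * (ρ^(2-a) / a) → L * 0 = 0
      have h2a : Tendsto (fun ρ : ℝ => ρ ^ (2 - a) / a) (nhdsWithin 0 (Set.Ioi 0)) (nhds 0) := by
        have hc : ContinuousAt (fun ρ : ℝ => ρ ^ (2 - a)) 0 :=
          Real.continuousAt_rpow_const 0 _ (Or.inr (by linarith))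
        have := (hc.continuousWithinAt (s := Set.Ioi 0)).div_const a
        rw [ContinuousWithinAt, Real.zero_rpow (by intro h; linarith), zero_div] at this
        exact this
      have := hslope.mul h2a
      rw [mul_zero] at this
      refine this.congr' ?_
      filter_upwards [self_mem_nhdsWithin] with ρ (hρ : 0 < ρ)
      have hρa : ρ ^ (a - 1) ≠ 0 := ne_of_gt (Real.rpow_pos_of_pos hρ _)
      rw [div_mul_div_comm, div_eq_div_iff (by positivity) (by positivity)]
      rw [show (2:ℝ) - a = 1 + (1 - a) by ring, show a - 1 = -(1 - a) by ring,
        Real.rpow_add hρ, Real.rpow_one, Real.rpow_neg hρ.le]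
      field_simp
  -- put the pieces together
  have key : Tendsto (fun ρ : ℝ => F ρ / ρ ^ a + c * u ^ a)
      (nhdsWithin 0 (Set.Ioi 0)) (nhds (c * u ^ a)) := by
    simpa using hmain.add (tendsto_const_nhds (α := ℝ) (x := c * u ^ a)
      (f := nhdsWithin 0 (Set.Ioi 0)))
  refine key.congr' ?_
  filter_upwards [self_mem_nhdsWithin] with ρ (hρ : 0 < ρ)
  have htρ : 0 < t + ρ * u := by positivity
  have hρa : (0:ℝ) < ρ ^ a := Real.rpow_pos_of_pos hρ _
  have hcross : Rbf H K (t + ρ * u) t =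
      2 ^ (-K) * (((t + ρ * u) ^ b + t ^ b) ^ K - ρ ^ a * u ^ a) := by
    unfold Rbf
    have : |t + ρ * u - t| = ρ * u := by
      rw [show t + ρ * u - t = ρ * u by ring, abs_of_pos (by positivity)]
    rw [this, Real.mul_rpow hρ.le hu.le, ← hb_def, ← ha_def]
  rw [hdiag _ htρ, hdiag _ ht, hcross]
  have hnum : (t + ρ * u) ^ a + t ^ a -
      2 * (2 ^ (-K) * (((t + ρ * u) ^ b + t ^ b) ^ K - ρ ^ a * u ^ a)) =
      F ρ + c * (ρ ^ a * u ^ a) := by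
    simp only [hF_def]; rw [← h2c]; ring
  rw [hnum, add_div, mul_comm (ρ ^ a) (u ^ a), ← mul_assoc, mul_div_assoc,
    div_self (ne_of_gt hρa), mul_one]
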